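/- Tripartite extremal construction for odd ℓ: Let ℓ ≥ 3 be odd and 1/2 ≤ α < (ℓ+1)/(2ℓ). The complete tripartite graph on n vertices with class sizes (α − (ℓ−1)/(2ℓ))n, (1/2 − α/2 + (ℓ−1)/(4ℓ))n, (1/2 − α/2 + (ℓ−1)/(4ℓ))n has minimum degree αn, and any family of pairwise vertex-disjoint copies of C_ℓ in it has size at most (α − (ℓ−1)/(2ℓ))n, which is less than n/ℓ. -/

import Mathlib

open SimpleGraph

/-- The class index of a vertex of the tripartite vertex set. -/
def triPart (a b c : ℕ) : Fin a ⊕ Fin b ⊕ Fin c → Fin 3 :=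
  Sum.elim (fun _ => 0) (Sum.elim (fun _ => 1) (fun _ => 2))

/-- The complete tripartite graph with class sizes `a`, `b`, `c`. -/
def completeTripartiteGraph (a b c : ℕ) : SimpleGraph (Fin a ⊕ Fin b ⊕ Fin c) where
  Adj x y := triPart a b c x ≠ triPart a b c y
  symm := ⟨fun _ _ h => h.symm⟩
  loopless := ⟨fun _ h => h rfl⟩

/-- An odd cycle admits no proper coloring avoiding the color `0` of `Fin 3`. -/
lemma odd_cycle_color (ℓ : ℕ) (hℓ : 3 ≤ ℓ) (hodd : Odd ℓ) (c : Fin ℓ → Fin 3)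
    (hc : ∀ x y : Fin ℓ, (cycleGraph ℓ).Adj x y → c x ≠ c y) :
    ∃ x, c x = 0 := by
  by_contra h
  push_neg at h
  have hℓ0 : 0 < ℓ := by omega
  have key : ∀ u v w : Fin 3, u ≠ 0 → v ≠ 0 → w ≠ 0 → u ≠ v → w ≠ v → u = w := by decide
  -- adjacency of consecutive vertices
  have hadj : ∀ m (hm : m + 1 < ℓ),
      (cycleGraph ℓ).Adj ⟨m, by omega⟩ ⟨m + 1, hm⟩ := by
    intro m hm
    rw [cycleGraph_adj']
    right
    have : ((⟨m + 1, hm⟩ : Fin ℓ) - ⟨m, by omega⟩) = ⟨1, by omega⟩ := by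
      rw [Fin.sub_def]
      congr 1
      have h1 : ℓ - m + (m + 1) = ℓ + 1 := by omega
      rw [h1, Nat.add_mod_left, Nat.mod_eq_of_lt (by omega)]
    rw [this]
  -- parity claim
  have par : ∀ m (hm : m < ℓ),
      (Even m → c ⟨m, hm⟩ = c ⟨0, hℓ0⟩) ∧ (¬ Even m → c ⟨m, hm⟩ ≠ c ⟨0, hℓ0⟩) := by
    intro m
    induction m with
    | zero => intro hm; exact ⟨fun _ => rfl, fun h => absurd Even.zero h⟩
    | succ p ih =>
      intro hm
      have hp : p < ℓ := by omega
      have hne := hc _ _ (hadj p hm)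
      constructor
      · intro hev
        have hodd' : ¬ Even p := by
          rcases Nat.even_or_odd p with h1 | h1
          · intro _; exact (Nat.even_add_one.mp hev) h1
          · exact (Nat.not_even_iff_odd).mpr h1
        have := (ih hp).2 hodd'
        exact key _ _ _ (h _) (h _) (h _) (Ne.symm hne) (Ne.symm this)
      · intro hnev
        have hev : Even p := by
          by_contra h1
          exact hnev (Nat.even_add_one.mpr h1)
        have := (ih hp).1 hev
        rw [← this]
        exact Ne.symm hne
  -- close the cycle: ℓ - 1 is even since ℓ is odd
  have hlast : ℓ - 1 < ℓ := by omega
  have hevlast : Even (ℓ - 1) := by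
    rcases hodd with ⟨t, ht⟩
    exact ⟨t, by omega⟩
  have h1 := (par (ℓ - 1) hlast).1 hevlast
  -- but ℓ-1 and 0 are adjacent
  have hadj0 : (cycleGraph ℓ).Adj ⟨ℓ - 1, hlast⟩ ⟨0, hℓ0⟩ := by
    rw [cycleGraph_adj']
    right
    have : ((⟨0, hℓ0⟩ : Fin ℓ) - ⟨ℓ - 1, hlast⟩) = ⟨1, by omega⟩ := by
      rw [Fin.sub_def]
      congr 1
      have h1 : ℓ - (ℓ - 1) + 0 = 1 := by omega
      rw [h1, Nat.mod_eq_of_lt (by omega)]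
    rw [this]
  exact (hc _ _ hadj0) h1

theorem tripartite_extremal_construction
    (ℓ : ℕ) (hℓ : 3 ≤ ℓ) (hodd : Odd ℓ) (α : ℝ)
    (hα₁ : 1 / 2 ≤ α) (hα₂ : α < ((ℓ : ℝ) + 1) / (2 * ℓ))
    (a b n : ℕ) (ha : 0 < a) (hb : 0 < b) (habn : a + 2 * b = n)
    (hav : (a : ℝ) = (α - ((ℓ : ℝ) - 1) / (2 * ℓ)) * n)
    (hbv : (b : ℝ) = (1 / 2 - α / 2 + ((ℓ : ℝ) - 1) / (4 * ℓ)) * n) :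
    (∀ v : Fin a ⊕ Fin b ⊕ Fin b,
      α * n ≤ ({w | (completeTripartiteGraph a b b).Adj v w}.ncard : ℝ)) ∧
    (∀ (k : ℕ) (f : Fin k → Fin ℓ → (Fin a ⊕ Fin b ⊕ Fin b)),
      (∀ i, Function.Injective (f i) ∧
        ∀ x y : Fin ℓ, (cycleGraph ℓ).Adj x y →
          (completeTripartiteGraph a b b).Adj (f i x) (f i y)) →
      (∀ i j, i ≠ j → ∀ x y : Fin ℓ, f i x ≠ f j y) →
      k ≤ a) ∧
    (a : ℝ) < (n : ℝ) / ℓ := by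
  have hℓr : (3 : ℝ) ≤ (ℓ : ℝ) := by exact_mod_cast hℓ
  have hℓpos : (0 : ℝ) < (ℓ : ℝ) := by linarith
  have hn : 0 < n := by omega
  have hnr : (0 : ℝ) < (n : ℝ) := by exact_mod_cast hn
  have hα₂' : α * (2 * (ℓ : ℝ)) < (ℓ : ℝ) + 1 := (lt_div_iff₀ (by linarith)).mp hα₂
  refine ⟨?_, ?_, ?_⟩
  · intro v
    -- compute the neighborhood cardinality by cases on the class of v
    have h2b : α * n ≤ ((b + b : ℕ) : ℝ) := by
      have hb' : ((b + b : ℕ) : ℝ) = (1 - α + ((ℓ : ℝ) - 1) / (2 * ℓ)) * n := by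
        push_cast
        rw [hbv]; ring_nf
      rw [hb']
      have hdiv : ((ℓ : ℝ) - 1) / (2 * ℓ) * (2 * ℓ) = (ℓ : ℝ) - 1 := by
        field_simp
      nlinarith [mul_pos hℓpos hnr, mul_nonneg hnr.le (by nlinarith : (0:ℝ) ≤ 1 - α + ((ℓ : ℝ) - 1) / (2 * ℓ) - α)]
    have hab : α * n ≤ ((a + b : ℕ) : ℝ) := by
      have hab' : ((a + b : ℕ) : ℝ) = (α / 2 + 1 / 2 - ((ℓ : ℝ) - 1) / (4 * ℓ)) * n := by
        push_cast
        rw [hav, hbv]; ring_nf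
      rw [hab']
      have hdiv : ((ℓ : ℝ) - 1) / (4 * ℓ) * (4 * ℓ) = (ℓ : ℝ) - 1 := by
        field_simp
      nlinarith [mul_nonneg hnr.le (by nlinarith : (0:ℝ) ≤ α / 2 + 1 / 2 - ((ℓ : ℝ) - 1) / (4 * ℓ) - α)]
    rcases v with x | x | x
    · -- class 0: neighbors are the two b-classes
      have hset : {w | (completeTripartiteGraph a b b).Adj (Sum.inl x) w} =
          Set.range (Sum.inr : Fin b ⊕ Fin b → Fin a ⊕ Fin b ⊕ Fin b) := by
        ext w
        rcases w with y | y | y <;>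
          simp [completeTripartiteGraph, triPart, Set.mem_setOf_eq]
      rw [hset, Set.ncard_eq_toFinset_card', Set.toFinset_range]
      have : (Finset.univ.image (Sum.inr : Fin b ⊕ Fin b → Fin a ⊕ Fin b ⊕ Fin b)).card
          = b + b := by
        rw [Finset.card_image_of_injective _ Sum.inr_injective]
        simp
      rw [this]
      exact_mod_cast h2b
    · -- class 1: neighbors are class 0 and class 2
      have hset : {w | (completeTripartiteGraph a b b).Adj (Sum.inr (Sum.inl x)) w} =
          Set.range (Sum.map id Sum.inr : Fin a ⊕ Fin b → Fin a ⊕ Fin b ⊕ Fin b) := by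
        ext w
        rcases w with y | y | y <;>
          simp [completeTripartiteGraph, triPart, Set.mem_setOf_eq, Sum.map]
      rw [hset, Set.ncard_eq_toFinset_card', Set.toFinset_range]
      have hinj : Function.Injective (Sum.map id Sum.inr : Fin a ⊕ Fin b → Fin a ⊕ Fin b ⊕ Fin b) :=
        Sum.map_injective.mpr ⟨Function.injective_id, Sum.inr_injective⟩
      rw [Finset.card_image_of_injective _ hinj]
      simp only [Finset.card_univ, Fintype.card_sum, Fintype.card_fin]
      exact_mod_cast hab
    · -- class 2: neighbors are class 0 and class 1
      have hset : {w | (completeTripartiteGraph a b b).Adj (Sum.inr (Sum.inr x)) w} =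
          Set.range (Sum.map id Sum.inl : Fin a ⊕ Fin b → Fin a ⊕ Fin b ⊕ Fin b) := by
        ext w
        rcases w with y | y | y <;>
          simp [completeTripartiteGraph, triPart, Set.mem_setOf_eq, Sum.map]
      rw [hset, Set.ncard_eq_toFinset_card', Set.toFinset_range]
      have hinj : Function.Injective (Sum.map id Sum.inl : Fin a ⊕ Fin b → Fin a ⊕ Fin b ⊕ Fin b) :=
        Sum.map_injective.mpr ⟨Function.injective_id, Sum.inl_injective⟩
      rw [Finset.card_image_of_injective _ hinj]
      simp only [Finset.card_univ, Fintype.card_sum, Fintype.card_fin]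
      exact_mod_cast hab
  · -- each cycle hits the first class
    intro k f hcyc hdisj
    have hex : ∀ i : Fin k, ∃ y : Fin a, ∃ x : Fin ℓ, f i x = Sum.inl y := by
      intro i
      obtain ⟨x, hx⟩ := odd_cycle_color ℓ hℓ hodd (fun x => triPart a b b (f i x))
        (fun x y hxy => (hcyc i).2 x y hxy)
      rcases hfx : f i x with y | y | y
      · exact ⟨y, x, hfx⟩
      · rw [hfx] at hx; simp [triPart] at hx
      · rw [hfx] at hx; simp [triPart] at hx
    choose g x hg using hex
    have hginj : Function.Injective g := by
      intro i j hij
      by_contra hne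
      exact hdisj i j hne (x i) (x j) (by rw [hg i, hg j, hij])
    simpa using Fintype.card_le_of_injective g hginj
  · -- a < n / ℓ
    rw [hav, lt_div_iff₀ hℓpos]
    have hdiv : ((ℓ : ℝ) - 1) / (2 * ℓ) * (2 * ℓ) = (ℓ : ℝ) - 1 := by field_simp
    nlinarith [mul_pos hnr hℓpos]
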